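/- For all c>0 and μ∈ℝ\{0}, the Weinstein quantity ∂_c M[Q_{c,μ}] equals √c/(c+2μ²), which is strictly positive. -/

import Mathlib

open Real

/-- Mass of the Gardner soliton as a function of the scaling `c`. -/
noncomputable def gardnerSolitonMass (μ c : ℝ) : ℝ :=
  2 * Real.sqrt c - 2 * Real.sqrt 2 * μ * Real.arctan (Real.sqrt c / (Real.sqrt 2 * μ))

theorem gardner_soliton_weinstein_mass (c μ : ℝ) (hc : 0 < c) (hμ : μ ≠ 0) :
    HasDerivAt (gardnerSolitonMass μ) (Real.sqrt c / (c + 2 * μ ^ 2)) c ∧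
    0 < Real.sqrt c / (c + 2 * μ ^ 2) := by
  have hsc : Real.sqrt c ≠ 0 := ne_of_gt (Real.sqrt_pos.mpr hc)
  have hs2 : Real.sqrt 2 ≠ 0 := ne_of_gt (Real.sqrt_pos.mpr (by norm_num))
  have hden : (0:ℝ) < c + 2 * μ ^ 2 := by positivity
  have h1 : HasDerivAt (fun x => 2 * Real.sqrt x) (2 * (1 / (2 * Real.sqrt c))) c :=
    (Real.hasDerivAt_sqrt hc.ne').const_mul 2
  have hinner : HasDerivAt (fun x => Real.sqrt x / (Real.sqrt 2 * μ))
      ((1 / (2 * Real.sqrt c)) / (Real.sqrt 2 * μ)) c :=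
    (Real.hasDerivAt_sqrt hc.ne').div_const _
  have h2 : HasDerivAt (fun x => Real.arctan (Real.sqrt x / (Real.sqrt 2 * μ)))
      ((1 / (1 + (Real.sqrt c / (Real.sqrt 2 * μ)) ^ 2)) *
        ((1 / (2 * Real.sqrt c)) / (Real.sqrt 2 * μ))) c :=
    (Real.hasDerivAt_arctan _).comp c hinner
  have h3 := h1.sub (h2.const_mul (2 * Real.sqrt 2 * μ))
  have hsq : (Real.sqrt c) ^ 2 = c := Real.sq_sqrt hc.le
  have hsq2 : (Real.sqrt 2) ^ 2 = 2 := Real.sq_sqrt (by norm_num)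
  constructor
  · refine h3.congr_deriv ?_
    symm
    field_simp
    ring_nf
    linear_combination (Real.sqrt c ^ 2) * hsq +
      (Real.sqrt c ^ 2 * μ ^ 2) * hsq2
  · exact div_pos (Real.sqrt_pos.mpr hc) hden
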